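/- The integral of the Wendland function over the half-line satisfies ∫_0^∞ φ_{ℓ,k}(r) dr = 2^k Γ(ℓ+1) Γ(k+1) / Γ(ℓ+2k+2). -/

import Mathlib

open Real MeasureTheory

/-- The Wendland function φ_{ℓ,k}. -/
noncomputable def wendland (l : ℕ) (k : ℝ) (r : ℝ) : ℝ :=
  if r ≤ 1 then
    (1 / (Real.Gamma k * (2:ℝ) ^ (k - 1))) *
      ∫ s in r..1, s * (1 - s) ^ l * (s ^ 2 - r ^ 2) ^ (k - 1)
  else 0

open Set intervalIntegral
lemma betaIntegrable {a b : ℝ} (ha : 0 < a) (hb : 0 < b) :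
    IntervalIntegrable (fun x => x ^ (a-1) * (1-x) ^ (b-1)) volume 0 1 := by
  have h1 : IntervalIntegrable (fun x : ℝ => x ^ (a-1)) volume 0 (1/2) :=
    intervalIntegrable_rpow' (by linarith)
  have c1 : ContinuousOn (fun x : ℝ => (1-x) ^ (b-1)) (Set.uIcc 0 (1/2)) := by
    apply ContinuousOn.rpow_const (by fun_prop)
    intro x hx
    rw [Set.uIcc_of_le (by norm_num)] at hx
    exact Or.inl (by simp at hx; linarith [hx.2])
  have h2 : IntervalIntegrable (fun x : ℝ => (1-x) ^ (b-1)) volume (1/2) 1 := by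
    have := (intervalIntegrable_rpow' (r := b-1) (by linarith) (a := 0) (b := 1/2)).comp_sub_left 1
    norm_num at this
    exact this.symm
  have c2 : ContinuousOn (fun x : ℝ => x ^ (a-1)) (Set.uIcc (1/2) 1) := by
    apply ContinuousOn.rpow_const (by fun_prop)
    intro x hx
    rw [Set.uIcc_of_le (by norm_num)] at hx
    exact Or.inl (by simp at hx; linarith [hx.1])
  exact (h1.mul_continuousOn c1).trans (h2.continuousOn_mul c2)

lemma betaValue {a b : ℝ} (ha : 0 < a) (hb : 0 < b) :
    ∫ x in (0:ℝ)..1, x ^ (a-1) * (1-x) ^ (b-1) = Gamma a * Gamma b / Gamma (a+b) := by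
  have hab : Real.Gamma (a+b) ≠ 0 := (Real.Gamma_pos_of_pos (by linarith)).ne'
  have key := Complex.Gamma_mul_Gamma_eq_betaIntegral
    (s := (a:ℂ)) (t := (b:ℂ)) (by simpa using ha) (by simpa using hb)
  have hbeta : Complex.betaIntegral a b
      = ((∫ x in (0:ℝ)..1, x ^ (a-1) * (1-x) ^ (b-1) : ℝ) : ℂ) := by
    rw [Complex.betaIntegral, ← intervalIntegral.integral_ofReal]
    apply intervalIntegral.integral_congr
    intro x hx
    rw [Set.uIcc_of_le (by norm_num)] at hx
    simp only [Complex.ofReal_mul,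
      Complex.ofReal_cpow hx.1 (a-1),
      Complex.ofReal_cpow (by linarith [hx.2] : (0:ℝ) ≤ 1 - x) (b-1)]
    push_cast
    ring
  rw [hbeta] at key
  rw [← Complex.ofReal_add a b] at key
  rw [Complex.Gamma_ofReal, Complex.Gamma_ofReal, Complex.Gamma_ofReal] at key
  have : ((Real.Gamma a * Real.Gamma b : ℝ) : ℂ)
      = ((Real.Gamma (a+b) * ∫ x in (0:ℝ)..1, x ^ (a-1) * (1-x) ^ (b-1) : ℝ) : ℂ) := by
    push_cast; exact key
  have h2 := Complex.ofReal_injective this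
  field_simp
  linarith [h2]

lemma oneSubSqIntegrable {k : ℝ} (hk : 0 < k) :
    IntervalIntegrable (fun x : ℝ => (1 - x^2) ^ (k-1)) volume 0 1 := by
  have h1 : IntervalIntegrable (fun x : ℝ => (1-x) ^ (k-1)) volume 0 1 := by
    have := (intervalIntegrable_rpow' (r := k-1) (by linarith) (a := 0) (b := 1)).comp_sub_left 1
    norm_num at this
    exact this.symm
  have c1 : ContinuousOn (fun x : ℝ => (1+x) ^ (k-1)) (Set.uIcc 0 1) := by
    apply ContinuousOn.rpow_const (by fun_prop)
    intro x hx
    rw [Set.uIcc_of_le (by norm_num)] at hx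
    exact Or.inl (by simp at hx; linarith [hx.1])
  have h2 := h1.mul_continuousOn c1
  rw [intervalIntegrable_iff_integrableOn_Ioc_of_le (by norm_num)] at h2 ⊢
  apply h2.congr_fun ?_ measurableSet_Ioc
  intro x hx
  simp only
  rw [← Real.mul_rpow (by simp at hx; linarith [hx.2]) (by simp at hx; linarith [hx.1])]
  ring_nf

lemma J0val {k : ℝ} (hk : 0 < k) :
    ∫ x in (0:ℝ)..1, (1 - x^2) ^ (k-1) = √π * Gamma k / (2 * Gamma (k + 1/2)) := by
  set g : ℝ → ℝ := fun t => if t ≤ 1 then (1/2) * (t ^ (-(2:ℝ)⁻¹) * (1-t) ^ (k-1)) else 0 with hg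
  have key := integral_comp_rpow_Ioi g (p := 2) two_ne_zero
  have hL : (∫ x in Ioi (0:ℝ), (|(2:ℝ)| * x ^ ((2:ℝ) - 1)) • g (x ^ (2:ℝ)))
      = ∫ x in (0:ℝ)..1, (1 - x^2) ^ (k-1) := by
    rw [show (∫ x in Ioi (0:ℝ), (|(2:ℝ)| * x ^ ((2:ℝ)-1)) • g (x ^ (2:ℝ)))
        = ∫ x in Ioi (0:ℝ), (Ioc (0:ℝ) 1).indicator (fun x => (1 - x^2) ^ (k-1)) x from ?_]
    · rw [MeasureTheory.setIntegral_indicator measurableSet_Ioc,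
        Set.inter_eq_right.mpr Ioc_subset_Ioi_self,
        intervalIntegral.integral_of_le (by norm_num),
        MeasureTheory.integral_Ioc_eq_integral_Ioo]
    apply MeasureTheory.setIntegral_congr_fun measurableSet_Ioi
    intro x hx
    simp only [mem_Ioi] at hx
    have hx2 : x ^ (2:ℝ) = x ^ 2 := by
      rw [show (2:ℝ) = ((2:ℕ):ℝ) by norm_num, Real.rpow_natCast]
    have hcond : x ^ (2:ℝ) ≤ 1 ↔ x ≤ 1 := by
      rw [hx2]
      constructor
      · intro h; nlinarith
      · intro h; nlinarith
    rw [hg]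
    simp only [smul_eq_mul, Set.indicator, mem_Ioc, hx, true_and]
    by_cases h1 : x ≤ 1
    · rw [if_pos (hcond.mpr h1), if_pos h1, hx2]
      have hxinv : (x ^ 2 : ℝ) ^ (-(2:ℝ)⁻¹) = x⁻¹ := by
        rw [← hx2, ← Real.rpow_mul hx.le]
        norm_num
        exact (Real.rpow_neg_one x) ▸ (by rw [Real.rpow_neg hx.le, Real.rpow_one])
      rw [hxinv, show ((2:ℝ)-1) = (1:ℝ) by norm_num, Real.rpow_one]
      rw [abs_of_pos (by norm_num : (0:ℝ) < 2)]
      field_simp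
    · rw [if_neg (fun h => h1 (hcond.mp h)), if_neg h1]
      simp
  have hR : (∫ y in Ioi (0:ℝ), g y) = √π * Gamma k / (2 * Gamma (k + 1/2)) := by
    rw [show (∫ y in Ioi (0:ℝ), g y)
        = ∫ y in Ioi (0:ℝ), (Ioc (0:ℝ) 1).indicator
            (fun t => (1/2) * (t ^ ((1:ℝ)/2 - 1) * (1-t) ^ (k-1))) y from ?_]
    · rw [MeasureTheory.setIntegral_indicator measurableSet_Ioc,
        Set.inter_eq_right.mpr Ioc_subset_Ioi_self,
        ← intervalIntegral.integral_of_le (by norm_num : (0:ℝ) ≤ 1)]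
      rw [intervalIntegral.integral_const_mul, betaValue (by norm_num : (0:ℝ) < 1/2) hk,
        Real.Gamma_one_half_eq]
      rw [show (1:ℝ)/2 + k = k + 1/2 by ring]
      ring
    apply MeasureTheory.setIntegral_congr_fun measurableSet_Ioi
    intro y hy
    simp only [mem_Ioi] at hy
    rw [hg]
    simp only [Set.indicator, mem_Ioc, hy, true_and]
    by_cases h1 : y ≤ 1
    · rw [if_pos h1, if_pos h1]
      norm_num
    · rw [if_neg h1, if_neg h1]
  rw [hL, hR] at key
  exact key

lemma innerEq {k s : ℝ} (hs : 0 < s) {r : ℝ} (hr0 : 0 ≤ r) (hrs : r ≤ s) :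
    (s^2 - r^2) ^ (k-1) = (s^2) ^ (k-1) * (1 - (s⁻¹*r)^2) ^ (k-1) := by
  have hu : s⁻¹ * r ≤ 1 := by rw [inv_mul_le_iff₀ hs]; simpa using hrs
  have hu0 : 0 ≤ s⁻¹ * r := by positivity
  have h1 : (0:ℝ) ≤ 1 - (s⁻¹*r)^2 := by nlinarith
  rw [← Real.mul_rpow (sq_nonneg s) h1]
  congr 1
  field_simp

lemma innerIntegrable {k s : ℝ} (hk : 0 < k) (hs : 0 < s) :
    IntervalIntegrable (fun r : ℝ => (s^2 - r^2) ^ (k-1)) volume 0 s := by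
  have h := ((oneSubSqIntegrable hk).comp_mul_left (c := s⁻¹)).const_mul ((s^2) ^ (k-1))
  have he : (0:ℝ) / s⁻¹ = 0 := by simp
  have he2 : (1:ℝ) / s⁻¹ = s := by field_simp
  rw [he, he2] at h
  rw [intervalIntegrable_iff_integrableOn_Ioc_of_le hs.le] at h ⊢
  apply h.congr_fun ?_ measurableSet_Ioc
  intro r hr
  simp only [mem_Ioc] at hr
  exact (innerEq hs hr.1.le hr.2).symm

lemma innerValue {k s : ℝ} (hk : 0 < k) (hs : 0 < s) :
    ∫ r in (0:ℝ)..s, (s^2 - r^2) ^ (k-1)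
      = s ^ (2*k-1) * ∫ x in (0:ℝ)..1, (1 - x^2) ^ (k-1) := by
  have step1 : ∫ r in (0:ℝ)..s, (s^2 - r^2) ^ (k-1)
      = ∫ r in (0:ℝ)..s, (s^2) ^ (k-1) * (1 - (s⁻¹*r)^2) ^ (k-1) := by
    apply intervalIntegral.integral_congr
    intro r hr
    rw [Set.uIcc_of_le hs.le] at hr
    exact innerEq hs hr.1 hr.2
  have step2 := intervalIntegral.mul_integral_comp_mul_left
    (a := 0) (b := s) (f := fun x : ℝ => (1 - x^2) ^ (k-1)) (c := s⁻¹)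
  rw [mul_zero, inv_mul_cancel₀ hs.ne'] at step2
  rw [step1, intervalIntegral.integral_const_mul]
  have step3 : ∫ r in (0:ℝ)..s, (1 - (s⁻¹*r)^2) ^ (k-1)
      = s * ∫ x in (0:ℝ)..1, (1 - x^2) ^ (k-1) := by
    rw [← step2]
    field_simp
  rw [step3]
  have hsq : (s^2 : ℝ) ^ (k-1) = s ^ (2*(k-1)) := by
    rw [← Real.rpow_natCast s 2, ← Real.rpow_mul hs.le]
    norm_num
  rw [hsq, ← mul_assoc]
  congr 1
  rw [show s ^ (2*(k-1)) * s = s ^ (2*(k-1)) * s ^ (1:ℝ) by rw [Real.rpow_one],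
    ← Real.rpow_add hs]
  congr 1
  ring

theorem wendland_integral (k : ℝ) (hk : 0 < k) (l : ℕ) (hl : 1 ≤ l) :
    ∫ r in Set.Ioi (0:ℝ), wendland l k r =
      (2:ℝ) ^ k * Real.Gamma ((l : ℝ) + 1) * Real.Gamma (k + 1) /
        Real.Gamma ((l : ℝ) + 2 * k + 2) := by
  have hk1 : (0:ℝ) < 2*k := by linarith
  set F : ℝ × ℝ → ℝ := fun p =>
    if 0 < p.1 ∧ p.1 < p.2 ∧ p.2 < 1 then
      p.2 * (1 - p.2)^l * (p.2^2 - p.1^2) ^ (k-1) else 0 with hF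
  have hFmeas : Measurable F := by
    apply Measurable.ite
    · rw [show {p : ℝ × ℝ | 0 < p.1 ∧ p.1 < p.2 ∧ p.2 < 1}
        = {p : ℝ × ℝ | 0 < p.1} ∩ ({p : ℝ × ℝ | p.1 < p.2} ∩ {p : ℝ × ℝ | p.2 < 1}) from rfl]
      exact (measurableSet_lt measurable_const measurable_fst).inter
        ((measurableSet_lt measurable_fst measurable_snd).inter
          (measurableSet_lt measurable_snd measurable_const))
    · fun_prop
    · exact measurable_const
  have hFnonneg : ∀ p, 0 ≤ F p := by
    intro p
    rw [hF]
    dsimp only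
    split
    · rename_i h
      obtain ⟨h1, h2, h3⟩ := h
      apply mul_nonneg (mul_nonneg (by linarith) (pow_nonneg (by linarith) l))
      exact Real.rpow_nonneg (by nlinarith) _
    · exact le_refl _
  -- r-slices
  have hslice : ∀ s : ℝ, s ∈ Set.Ioo (0:ℝ) 1 → (fun r => F (r, s))
      = (Set.Ioo (0:ℝ) s).indicator (fun r => s * (1-s)^l * (s^2 - r^2) ^ (k-1)) := by
    intro s hs
    funext r
    simp only [hF, Set.indicator, Set.mem_Ioo]
    by_cases h : 0 < r ∧ r < s
    · rw [if_pos ⟨h.1, h.2, hs.2⟩, if_pos h]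
    · rw [if_neg (fun hh => h ⟨hh.1, hh.2.1⟩), if_neg h]
  have hslice0 : ∀ s : ℝ, s ∉ Set.Ioo (0:ℝ) 1 → (fun r => F (r, s)) = (fun _ => (0:ℝ)) := by
    intro s hs
    funext r
    simp only [hF]
    rw [if_neg]
    rintro ⟨h1, h2, h3⟩
    exact hs ⟨lt_trans h1 h2, h3⟩
  have hIntSlice : ∀ s : ℝ, Integrable (fun r => F (r, s)) volume := by
    intro s
    by_cases hs : s ∈ Set.Ioo (0:ℝ) 1
    · rw [hslice s hs, integrable_indicator_iff measurableSet_Ioo]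
      have h := (innerIntegrable hk hs.1).const_mul (s * (1-s)^l)
      rw [intervalIntegrable_iff_integrableOn_Ioc_of_le hs.1.le] at h
      exact h.mono_set Set.Ioo_subset_Ioc_self
    · rw [hslice0 s hs]
      exact integrable_zero _ _ _
  -- value of the r-integral
  have hIval : ∀ s : ℝ, (∫ r, F (r, s))
      = (Set.Ioo (0:ℝ) 1).indicator
          (fun s => (√π * Gamma k / (2 * Gamma (k + 1/2))) * (s ^ (2*k) * (1-s)^l)) s := by
    intro s
    by_cases hs : s ∈ Set.Ioo (0:ℝ) 1
    · rw [hslice s hs, MeasureTheory.integral_indicator measurableSet_Ioo,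
        Set.indicator_of_mem hs, ← MeasureTheory.integral_Ioc_eq_integral_Ioo,
        ← intervalIntegral.integral_of_le hs.1.le,
        intervalIntegral.integral_const_mul, innerValue hk hs.1, J0val hk]
      have hss : s * s ^ (2*k-1) = s ^ (2*k) := by
        rw [show s * s ^ (2*k-1) = s ^ (1:ℝ) * s ^ (2*k-1) by rw [Real.rpow_one],
          ← Real.rpow_add hs.1]
        congr 1
        ring
      calc s * (1-s)^l * (s ^ (2*k-1) * (√π * Gamma k / (2 * Gamma (k + 1/2))))
          = (s * s ^ (2*k-1)) * ((1-s)^l * (√π * Gamma k / (2 * Gamma (k + 1/2)))) := by ring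
        _ = _ := by rw [hss]; ring
    · rw [hslice0 s hs, Set.indicator_of_notMem hs]
      exact integral_zero _ _
  have hbetaInt : IntegrableOn
      (fun s : ℝ => (√π * Gamma k / (2 * Gamma (k + 1/2))) * (s ^ (2*k) * (1-s)^l))
      (Set.Ioo (0:ℝ) 1) volume := by
    have hb := (betaIntegrable (a := 2*k+1) (b := (l:ℝ)+1) (by linarith) (by positivity : (0:ℝ) < (l:ℝ)+1)).const_mul
      (√π * Gamma k / (2 * Gamma (k + 1/2)))
    rw [intervalIntegrable_iff_integrableOn_Ioc_of_le (by norm_num)] at hb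
    apply IntegrableOn.congr_fun (hb.mono_set Set.Ioo_subset_Ioc_self) ?_ measurableSet_Ioo
    intro x hx
    simp only
    rw [show 2*k+1-1 = 2*k by ring, show (l:ℝ)+1-1 = (l:ℝ) by ring, Real.rpow_natCast]
  have hnormInt : Integrable (fun s => ∫ r, ‖F (r, s)‖) volume := by
    have heq : (fun s => ∫ r, ‖F (r, s)‖) = fun s => (Set.Ioo (0:ℝ) 1).indicator
        (fun s => (√π * Gamma k / (2 * Gamma (k + 1/2))) * (s ^ (2*k) * (1-s)^l)) s := by
      funext s
      calc (∫ r, ‖F (r, s)‖) = ∫ r, F (r, s) := by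
            apply MeasureTheory.integral_congr_ae
            filter_upwards with r
            exact Real.norm_of_nonneg (hFnonneg _)
        _ = _ := hIval s
    rw [heq]
    exact (integrable_indicator_iff measurableSet_Ioo).2 hbetaInt
  have hFint : Integrable F (volume.prod volume) := by
    rw [MeasureTheory.integrable_prod_iff' hFmeas.aestronglyMeasurable]
    exact ⟨Filter.Eventually.of_forall hIntSlice, hnormInt⟩
  have swap := MeasureTheory.integral_integral_swap (f := fun r s => F (r, s))
    (μ := volume) (ν := volume) (by exact hFint)
  -- the s-integral of the swapped side
  have hRHS : (∫ s, ∫ r, F (r, s))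
      = (√π * Gamma k / (2 * Gamma (k + 1/2)))
          * (Gamma (2*k+1) * Gamma ((l:ℝ)+1) / Gamma (2*k+1+((l:ℝ)+1))) := by
    calc (∫ s, ∫ r, F (r, s))
        = ∫ s, (Set.Ioo (0:ℝ) 1).indicator
            (fun s => (√π * Gamma k / (2 * Gamma (k + 1/2))) * (s ^ (2*k) * (1-s)^l)) s :=
          MeasureTheory.integral_congr_ae (Filter.Eventually.of_forall hIval)
      _ = ∫ s in Set.Ioo (0:ℝ) 1,
            (√π * Gamma k / (2 * Gamma (k + 1/2))) * (s ^ (2*k) * (1-s)^l) :=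
          MeasureTheory.integral_indicator measurableSet_Ioo
      _ = ∫ s in Set.Ioo (0:ℝ) 1,
            (√π * Gamma k / (2 * Gamma (k + 1/2))) * (s ^ (2*k+1-1) * (1-s) ^ ((l:ℝ)+1-1)) := by
          apply MeasureTheory.setIntegral_congr_fun measurableSet_Ioo
          intro x hx
          simp only
          rw [show 2*k+1-1 = 2*k by ring, show (l:ℝ)+1-1 = (l:ℝ) by ring, Real.rpow_natCast]
      _ = (√π * Gamma k / (2 * Gamma (k + 1/2)))
            * ∫ s in (0:ℝ)..1, s ^ (2*k+1-1) * (1-s) ^ ((l:ℝ)+1-1) := by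
          rw [MeasureTheory.integral_const_mul, intervalIntegral.integral_of_le
            (by norm_num : (0:ℝ) ≤ 1), MeasureTheory.integral_Ioc_eq_integral_Ioo]
      _ = _ := by
          rw [betaValue (by linarith : (0:ℝ) < 2*k+1) (by positivity : (0:ℝ) < (l:ℝ)+1)]
  -- s-slices
  have hsliceS : ∀ r : ℝ, (∫ s, F (r, s)) = (Set.Ioo (0:ℝ) 1).indicator
      (fun r => ∫ s in r..1, s * (1-s)^l * (s^2 - r^2) ^ (k-1)) r := by
    intro r
    by_cases hr : r ∈ Set.Ioo (0:ℝ) 1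
    · have heq : (fun s => F (r, s))
          = (Set.Ioo r 1).indicator (fun s => s * (1-s)^l * (s^2 - r^2) ^ (k-1)) := by
        funext s
        simp only [hF, Set.indicator, Set.mem_Ioo]
        by_cases h : r < s ∧ s < 1
        · rw [if_pos ⟨hr.1, h.1, h.2⟩, if_pos h]
        · rw [if_neg (fun hh => h ⟨hh.2.1, hh.2.2⟩), if_neg h]
      rw [heq, MeasureTheory.integral_indicator measurableSet_Ioo, Set.indicator_of_mem hr,
        ← MeasureTheory.integral_Ioc_eq_integral_Ioo,
        ← intervalIntegral.integral_of_le hr.2.le]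
    · rw [Set.indicator_of_notMem hr]
      have heq : (fun s => F (r, s)) = (fun _ => (0:ℝ)) := by
        funext s
        simp only [hF]
        rw [if_neg]
        rintro ⟨h1, h2, h3⟩
        exact hr ⟨h1, lt_trans h2 h3⟩
      rw [heq]
      exact integral_zero _ _
  have hwend0 : ∫ r in Set.Ioi (0:ℝ), wendland l k r = ∫ r in Set.Ioo (0:ℝ) 1, wendland l k r := by
    apply MeasureTheory.setIntegral_eq_of_subset_of_forall_diff_eq_zero measurableSet_Ioi
      Set.Ioo_subset_Ioi_self
    intro x hx
    obtain ⟨hx1, hx2⟩ := hx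
    have h1x : (1:ℝ) ≤ x := by
      by_contra h
      exact hx2 ⟨hx1, lt_of_not_ge h⟩
    unfold wendland
    by_cases h : x ≤ 1
    · rw [if_pos h, show x = 1 from le_antisymm h h1x, intervalIntegral.integral_same, mul_zero]
    · rw [if_neg h]
  have hwendI : ∫ r in Set.Ioo (0:ℝ) 1, wendland l k r
      = (1 / (Real.Gamma k * (2:ℝ) ^ (k-1))) * ∫ r, (∫ s, F (r, s)) := by
    rw [show (∫ r, (∫ s, F (r, s))) = ∫ r, (Set.Ioo (0:ℝ) 1).indicator
        (fun r => ∫ s in r..1, s * (1-s)^l * (s^2 - r^2) ^ (k-1)) r from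
      MeasureTheory.integral_congr_ae (Filter.Eventually.of_forall hsliceS),
      MeasureTheory.integral_indicator measurableSet_Ioo, ← MeasureTheory.integral_const_mul]
    apply MeasureTheory.setIntegral_congr_fun measurableSet_Ioo
    intro r hr
    unfold wendland
    rw [if_pos hr.2.le]
  rw [hwend0, hwendI, swap, hRHS]
  -- final arithmetic
  have hpi : √π ≠ 0 := (Real.sqrt_pos.mpr Real.pi_pos).ne'
  have hGk : (0:ℝ) < Gamma k := Real.Gamma_pos_of_pos hk
  have hGkh : (0:ℝ) < Gamma (k + 1/2) := Real.Gamma_pos_of_pos (by linarith)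
  have hGD : (0:ℝ) < Gamma ((l:ℝ) + 2*k + 2) := Real.Gamma_pos_of_pos (by positivity)
  have hG2k1 : Gamma (2*k+1) = 2*k * Gamma (2*k) := Real.Gamma_add_one hk1.ne'
  have hGk1 : Gamma (k+1) = k * Gamma k := Real.Gamma_add_one hk.ne'
  have hdup := Real.Gamma_mul_Gamma_add_half k
  have h2 : (2:ℝ) ^ (1-2*k) * (2:ℝ) ^ (2*k-1) = 1 := by
    rw [← Real.rpow_add two_pos]
    norm_num
  have hG2k : Gamma (2*k) * √π = Gamma k * Gamma (k + 1/2) * (2:ℝ) ^ (2*k-1) := by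
    calc Gamma (2*k) * √π
        = Gamma (2*k) * √π * ((2:ℝ) ^ (1-2*k) * (2:ℝ) ^ (2*k-1)) := by rw [h2, mul_one]
      _ = (Gamma (2*k) * (2:ℝ) ^ (1-2*k) * √π) * (2:ℝ) ^ (2*k-1) := by ring
      _ = Gamma k * Gamma (k + 1/2) * (2:ℝ) ^ (2*k-1) := by rw [← hdup]
  have h3 : (2:ℝ) ^ (2*k-1) = (2:ℝ) ^ k * (2:ℝ) ^ (k-1) := by
    rw [← Real.rpow_add two_pos]
    congr 1
    ring
  have harg : Gamma (2*k+1+((l:ℝ)+1)) = Gamma ((l:ℝ) + 2*k + 2) := by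
    congr 1
    ring
  rw [harg, hG2k1, hGk1]
  set G := Real.Gamma k with hGdef
  set H := Real.Gamma (k + 1/2) with hHdef
  set G2 := Real.Gamma (2*k) with hG2def
  set L := Real.Gamma ((l:ℝ) + 1) with hLdef
  set D := Real.Gamma ((l:ℝ) + 2*k + 2) with hDdef
  set A := (2:ℝ) ^ k with hAdef
  set B := (2:ℝ) ^ (k-1) with hBdef
  rw [h3] at hG2k
  have hA : (0:ℝ) < A := Real.rpow_pos_of_pos two_pos _
  have hB : (0:ℝ) < B := Real.rpow_pos_of_pos two_pos _
  field_simp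
  linear_combination L * hG2k
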